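/- Let G be a finite connected simple graph with n ≥ 3 vertices. If G has a cut edge (an edge whose deletion disconnects G), then for any two distinct vertices u, v of G, Ω_G(u,v) > 2/n. -/

import Mathlib

open Matrix Finset

/-- The Moore–Penrose pseudoinverse of a real square matrix, specified (when it exists)
by the four Penrose conditions. -/
noncomputable def pinv {n : Type*} [Fintype n] [DecidableEq n] (A : Matrix n n ℝ) :
    Matrix n n ℝ :=
  open scoped Classical in
  if h : ∃ B, A * B * A = A ∧ B * A * B = B ∧ (A * B)ᵀ = A * B ∧ (B * A)ᵀ = B * A
  then h.choose else 0

/-- The resistance distance between two vertices of a graph: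
`Ω_G(i,j) = (e_i − e_j)ᵀ L⁺ (e_i − e_j)` where `L⁺` is the Moore–Penrose pseudoinverse
of the Laplacian matrix of `G`. -/
noncomputable def resDist {V : Type*} [Fintype V] [DecidableEq V] (G : SimpleGraph V)
    (i j : V) : ℝ :=
  letI : DecidableRel G.Adj := Classical.decRel _
  (Pi.single i 1 - Pi.single j 1) ⬝ᵥ
    (pinv (G.lapMatrix ℝ)) *ᵥ (Pi.single i 1 - Pi.single j 1)

lemma resDist_comm {V : Type*} [Fintype V] [DecidableEq V] (G : SimpleGraph V) (i j : V) :
    resDist G i j = resDist G j i := by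
  unfold resDist
  rw [show (Pi.single j 1 - Pi.single i 1 : V → ℝ)
        = -(Pi.single i 1 - Pi.single j 1) by rw [neg_sub]]
  rw [Matrix.mulVec_neg, dotProduct_neg, neg_dotProduct, neg_neg]

/-- The global cyclicity index `C(G) = Σ_{ij ∈ E(G)} (1/Ω_G(i,j) − 1)`,
the sum over all edges of `G`. -/
noncomputable def cyclicity {V : Type*} [Fintype V] [DecidableEq V] (G : SimpleGraph V) : ℝ :=
  letI : DecidableRel G.Adj := Classical.decRel _
  ∑ e ∈ G.edgeFinset,
    Sym2.lift ⟨fun i j => 1 / resDist G i j - 1,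
      fun i j => by simp only []; rw [resDist_comm G i j]⟩ e

lemma penrose_unique {n : Type*} [Fintype n] [DecidableEq n] (A B C : Matrix n n ℝ)
    (hB : A * B * A = A ∧ B * A * B = B ∧ (A * B)ᵀ = A * B ∧ (B * A)ᵀ = B * A)
    (hC : A * C * A = A ∧ C * A * C = C ∧ (A * C)ᵀ = A * C ∧ (C * A)ᵀ = C * A) :
    B = C := by
  obtain ⟨hB1, hB2, hB3, hB4⟩ := hB
  obtain ⟨hC1, hC2, hC3, hC4⟩ := hC
  have e1 : (A * B) * (A * C) = A * C := by rw [← Matrix.mul_assoc, hB1]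
  have e2 : (C * A) * (B * A) = C * A := by
    rw [Matrix.mul_assoc, ← Matrix.mul_assoc A B A, hB1]
  have h1 : A * B = A * C := by
    calc A * B = (A * C) * (A * B) := by rw [← Matrix.mul_assoc, hC1]
    _ = (A * C)ᵀ * (A * B)ᵀ := by rw [hC3, hB3]
    _ = ((A * B) * (A * C))ᵀ := (Matrix.transpose_mul _ _).symm
    _ = (A * C)ᵀ := by rw [e1]
    _ = A * C := hC3
  have h2 : B * A = C * A := by
    calc B * A = (B * A) * (C * A) := by
          rw [Matrix.mul_assoc, ← Matrix.mul_assoc A C A, hC1]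
    _ = (B * A)ᵀ * (C * A)ᵀ := by rw [hB4, hC4]
    _ = ((C * A) * (B * A))ᵀ := (Matrix.transpose_mul _ _).symm
    _ = (C * A)ᵀ := by rw [e2]
    _ = C * A := hC4
  calc B = B * A * B := hB2.symm
  _ = (C * A) * B := by rw [h2]
  _ = C * (A * B) := Matrix.mul_assoc _ _ _
  _ = C * (A * C) := by rw [h1]
  _ = C * A * C := (Matrix.mul_assoc _ _ _).symm
  _ = C := hC2

lemma pinv_eq {n : Type*} [Fintype n] [DecidableEq n] (A B : Matrix n n ℝ)
    (hB : A * B * A = A ∧ B * A * B = B ∧ (A * B)ᵀ = A * B ∧ (B * A)ᵀ = B * A) :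
    pinv A = B := by
  unfold pinv
  have hex : ∃ B, A * B * A = A ∧ B * A * B = B ∧ (A * B)ᵀ = A * B ∧ (B * A)ᵀ = B * A := ⟨B, hB⟩
  rw [dif_pos hex]
  exact penrose_unique A _ B hex.choose_spec hB

section Graph

variable {V : Type*} [Fintype V] [DecidableEq V] (G : SimpleGraph V) [DecidableRel G.Adj]

lemma degree_full {u : V} (h : G.degree u = Fintype.card V - 1) :
    ∀ w, w ≠ u → G.Adj u w := by
  intro w hw
  have hsub : G.neighborFinset u ⊆ Finset.univ.erase u := by
    intro t ht
    exact Finset.mem_erase.mpr ⟨((G.mem_neighborFinset u t).mp ht).ne', Finset.mem_univ t⟩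
  have heq : G.neighborFinset u = Finset.univ.erase u := by
    apply Finset.eq_of_subset_of_card_le hsub
    rw [Finset.card_erase_of_mem (Finset.mem_univ u), Finset.card_univ,
      G.card_neighborFinset_eq_degree, h]
  have hmem : w ∈ G.neighborFinset u := by
    rw [heq]; exact Finset.mem_erase.mpr ⟨hw, Finset.mem_univ w⟩
  exact (G.mem_neighborFinset u w).mp hmem

lemma no_bridge {u v : V} (hcard : 3 ≤ Fintype.card V) (huv : u ≠ v)
    (hu : ∀ w, w ≠ u → G.Adj u w) (hv : ∀ w, w ≠ v → G.Adj v w) :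
    ¬ ∃ e, G.IsBridge e := by
  rintro ⟨e, he⟩
  induction e using Sym2.ind with
  | _ a b =>
  rw [SimpleGraph.isBridge_iff] at he
  have hnr := he
  have hne : a ≠ b := by rintro rfl; exact hnr (SimpleGraph.Reachable.refl _)
  have key : ∃ t, t ≠ a ∧ t ≠ b ∧ G.Adj a t ∧ G.Adj t b := by
    by_cases h1 : u ≠ a ∧ u ≠ b
    · exact ⟨u, h1.1, h1.2, (hu a (Ne.symm h1.1)).symm, hu b (Ne.symm h1.2)⟩
    · by_cases h2 : v ≠ a ∧ v ≠ b
      · exact ⟨v, h2.1, h2.2, (hv a (Ne.symm h2.1)).symm, hv b (Ne.symm h2.2)⟩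
      · push_neg at h1 h2
        have hw : ∃ w : V, w ≠ u ∧ w ≠ v := by
          have hnonempty : (({u, v} : Finset V)ᶜ).Nonempty := by
            rw [← Finset.card_pos, Finset.card_compl]
            have hle : ({u, v} : Finset V).card ≤ 2 := by
              apply le_trans (Finset.card_insert_le _ _); simp
            omega
          obtain ⟨w, hwmem⟩ := hnonempty
          simp only [Finset.mem_compl, Finset.mem_insert, Finset.mem_singleton, not_or] at hwmem
          exact ⟨w, hwmem.1, hwmem.2⟩
        obtain ⟨w, hwu, hwv⟩ := hw
        have hu' : u = a ∨ u = b := by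
          by_cases h : u = a
          · exact Or.inl h
          · exact Or.inr (h1 h)
        have hv' : v = a ∨ v = b := by
          by_cases h : v = a
          · exact Or.inl h
          · exact Or.inr (h2 h)
        have hcase : (a = u ∧ b = v) ∨ (a = v ∧ b = u) := by
          rcases hu' with h | h <;> rcases hv' with h' | h'
          · exact absurd (h.trans h'.symm) huv
          · exact Or.inl ⟨h.symm, h'.symm⟩
          · exact Or.inr ⟨h'.symm, h.symm⟩
          · exact absurd (h.trans h'.symm) huv
        rcases hcase with ⟨rfl, rfl⟩ | ⟨rfl, rfl⟩
        · exact ⟨w, hwu, hwv, hu w hwu, (hv w hwv).symm⟩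
        · exact ⟨w, hwv, hwu, hv w hwv, (hu w hwu).symm⟩
  obtain ⟨t, hta, htb, hat, htb2⟩ := key
  have h1 : (G \ SimpleGraph.fromEdgeSet {s(a, b)}).Adj a t := by
    rw [SimpleGraph.sdiff_adj]
    refine ⟨hat, ?_⟩
    rw [SimpleGraph.fromEdgeSet_adj]
    rintro ⟨hmem, -⟩
    rw [Set.mem_singleton_iff, Sym2.eq_iff] at hmem
    rcases hmem with ⟨-, h⟩ | ⟨h, -⟩
    · exact htb h
    · exact hne h
  have h2 : (G \ SimpleGraph.fromEdgeSet {s(a, b)}).Adj t b := by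
    rw [SimpleGraph.sdiff_adj]
    refine ⟨htb2, ?_⟩
    rw [SimpleGraph.fromEdgeSet_adj]
    rintro ⟨hmem, -⟩
    rw [Set.mem_singleton_iff, Sym2.eq_iff] at hmem
    rcases hmem with ⟨h, -⟩ | ⟨-, h⟩
    · exact hta h
    · exact hne h.symm
  exact hnr (h1.reachable.trans h2.reachable)

lemma main_aux (hG : G.Connected) (hcard : 3 ≤ Fintype.card V)
    (hbridge : ∃ e, G.IsBridge e) (u v : V) (huv : u ≠ v) :
    2 / (Fintype.card V : ℝ) <
      (Pi.single u 1 - Pi.single v 1) ⬝ᵥ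
        (pinv (G.lapMatrix ℝ)) *ᵥ (Pi.single u 1 - Pi.single v 1) := by
  set n : ℝ := (Fintype.card V : ℝ) with hn
  have hn3 : (3 : ℝ) ≤ n := by rw [hn]; exact_mod_cast hcard
  have hn0 : (0 : ℝ) < n := by linarith
  set L := G.lapMatrix ℝ with hL
  set J : Matrix V V ℝ := Matrix.of (fun _ _ => 1) with hJdef
  have hJsymm : Jᵀ = J := rfl
  have hLJ : L * J = 0 := by
    ext i k
    have h0 := congrFun (G.lapMatrix_mulVec_const_eq_zero (R := ℝ)) i
    simpa [Matrix.mul_apply, Matrix.mulVec, dotProduct, hJdef] using h0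
  have hLsymm : Lᵀ = L := G.isSymm_lapMatrix (R := ℝ)
  have hJL : J * L = 0 := by
    have h0 : (L * J)ᵀ = (0 : Matrix V V ℝ) := by rw [hLJ, Matrix.transpose_zero]
    rwa [Matrix.transpose_mul, hJsymm, hLsymm] at h0
  have hJJ : J * J = n • J := by
    ext i k
    simp [Matrix.mul_apply, hJdef, hn, Finset.card_univ]
  set A := L + n⁻¹ • J with hA
  have hJA : J * A = J := by
    rw [hA, Matrix.mul_add, hJL, Matrix.mul_smul, hJJ, zero_add, smul_smul,
      inv_mul_cancel₀ (ne_of_gt hn0), one_smul]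
  have hAJ : A * J = J := by
    rw [hA, Matrix.add_mul, hLJ, Matrix.smul_mul, hJJ, zero_add, smul_smul,
      inv_mul_cancel₀ (ne_of_gt hn0), one_smul]
  have hAsymm : Aᵀ = A := by
    rw [hA, Matrix.transpose_add, Matrix.transpose_smul, hJsymm, hLsymm]
  have hAherm : A.IsHermitian := by
    rw [Matrix.IsHermitian, Matrix.conjTranspose_eq_transpose_of_trivial, hAsymm]
  have quadJ : ∀ x : V → ℝ, x ⬝ᵥ J *ᵥ x = (∑ i, x i) ^ 2 := by
    intro x
    simp only [dotProduct, Matrix.mulVec, hJdef, Matrix.of_apply, one_mul]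
    rw [← Finset.sum_mul, sq]

  have hquadL : ∀ x : V → ℝ, 0 ≤ x ⬝ᵥ L *ᵥ x := by
    intro x
    have h0 := (G.posSemidef_lapMatrix ℝ).dotProduct_mulVec_nonneg x
    simpa using h0
  have hApos : A.PosDef := by
    refine Matrix.PosDef.of_dotProduct_mulVec_pos hAherm (fun x hx => ?_)
    rw [star_trivial]
    have hxAx : x ⬝ᵥ A *ᵥ x = x ⬝ᵥ L *ᵥ x + n⁻¹ * (∑ i, x i) ^ 2 := by
      rw [hA, Matrix.add_mulVec, dotProduct_add, Matrix.smul_mulVec,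
        dotProduct_smul, quadJ, smul_eq_mul]
    rw [hxAx]
    rcases lt_or_eq_of_le (hquadL x) with h | h
    · have h2 : 0 ≤ n⁻¹ * (∑ i, x i) ^ 2 := by positivity
      linarith
    · have hconst : ∀ i j : V, x i = x j := by
        intro i j
        have h0 : Matrix.toLinearMap₂' ℝ (G.lapMatrix ℝ) x x = 0 := by
          rw [Matrix.toLinearMap₂'_apply']; exact h.symm
        exact ((G.lapMatrix_toLinearMap₂'_apply'_eq_zero_iff_forall_reachable x).mp h0) i j
          (hG.preconnected i j)
      obtain ⟨i0⟩ := hG.nonempty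
      have hc : x i0 ≠ 0 := by
        intro h0
        apply hx
        funext j
        rw [hconst j i0, h0]; rfl
      have hsum : ∑ i, x i = n * x i0 := by
        rw [Finset.sum_congr rfl (fun j _ => hconst j i0)]
        simp [Finset.card_univ, hn, mul_comm]
      rw [← h, zero_add, hsum]
      have h1 : n * x i0 ≠ 0 := mul_ne_zero (ne_of_gt hn0) hc
      have h2 : 0 < (n * x i0) ^ 2 :=
        lt_of_le_of_ne (sq_nonneg _) (Ne.symm (pow_ne_zero 2 h1))
      positivity
  haveI : Invertible A := hApos.isUnit.invertible
  have hAinv : A * A⁻¹ = 1 := Matrix.mul_inv_of_invertible A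
  have hAinv' : A⁻¹ * A = 1 := Matrix.inv_mul_of_invertible A
  have hJAinv : J * A⁻¹ = J := by
    calc J * A⁻¹ = (J * A) * A⁻¹ := by rw [hJA]
    _ = J * (A * A⁻¹) := Matrix.mul_assoc _ _ _
    _ = J := by rw [hAinv, Matrix.mul_one]
  have hAinvJ : A⁻¹ * J = J := by
    calc A⁻¹ * J = A⁻¹ * (A * J) := by rw [hAJ]
    _ = (A⁻¹ * A) * J := (Matrix.mul_assoc _ _ _).symm
    _ = J := by rw [hAinv', Matrix.one_mul]
  set B := A⁻¹ - n⁻¹ • J with hB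
  have hLA : L = A - n⁻¹ • J := eq_sub_of_add_eq hA.symm
  have hLB : L * B = 1 - n⁻¹ • J := by
    rw [hB, Matrix.mul_sub, Matrix.mul_smul, hLJ, smul_zero, sub_zero, hLA,
      Matrix.sub_mul, hAinv, Matrix.smul_mul, hJAinv]
  have hBL : B * L = 1 - n⁻¹ • J := by
    rw [hB, Matrix.sub_mul, Matrix.smul_mul, hJL, smul_zero, sub_zero, hLA,
      Matrix.mul_sub, hAinv', Matrix.mul_smul, hAinvJ]
  have hJB : J * B = 0 := by
    rw [hB, Matrix.mul_sub, hJAinv, Matrix.mul_smul, hJJ, smul_smul,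
      inv_mul_cancel₀ (ne_of_gt hn0), one_smul, sub_self]
  have hpen : L * B * L = L ∧ B * L * B = B ∧ (L * B)ᵀ = L * B ∧ (B * L)ᵀ = B * L := by
    refine ⟨?_, ?_, ?_, ?_⟩
    · rw [hLB, Matrix.sub_mul, Matrix.one_mul, Matrix.smul_mul, hJL, smul_zero, sub_zero]
    · rw [hBL, Matrix.sub_mul, Matrix.one_mul, Matrix.smul_mul, hJB, smul_zero, sub_zero]
    · rw [hLB, Matrix.transpose_sub, Matrix.transpose_one, Matrix.transpose_smul, hJsymm]
    · rw [hBL, Matrix.transpose_sub, Matrix.transpose_one, Matrix.transpose_smul, hJsymm]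
  have hpinv : pinv L = B := pinv_eq L B hpen
  set x : V → ℝ := Pi.single u 1 - Pi.single v 1 with hx
  have hxu : x u = 1 := by
    simp [hx, Pi.single_eq_same, Pi.single_eq_of_ne huv]
  have hxv : x v = -1 := by
    simp [hx, Pi.single_eq_same, Pi.single_eq_of_ne huv.symm]
  have hxne : x ≠ 0 := by
    intro h0
    have h1 : (1 : ℝ) = 0 := by rw [← hxu, h0]; rfl
    exact one_ne_zero h1
  have hsumx : ∑ i, x i = 0 := by
    simp [hx, Finset.sum_sub_distrib, Pi.single_apply]
  have hJx : J *ᵥ x = 0 := by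
    funext i
    have h0 : (J *ᵥ x) i = ∑ j, x j := by
      simp [Matrix.mulVec, dotProduct, hJdef]
    rw [h0, hsumx]; rfl
  have hxx : x ⬝ᵥ x = 2 := by
    simp [hx, sub_dotProduct, dotProduct_sub, single_dotProduct,
      Pi.single_eq_same, Pi.single_eq_of_ne huv, Pi.single_eq_of_ne huv.symm]
    norm_num
  have hAx : A *ᵥ x = L *ᵥ x := by
    rw [hA, Matrix.add_mulVec, Matrix.smul_mulVec, hJx, smul_zero, add_zero]
  set q := x ⬝ᵥ L *ᵥ x with hq
  have hq0 : 0 < q := by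
    have h0 := hApos.dotProduct_mulVec_pos hxne
    rw [star_trivial, hAx] at h0
    exact h0
  -- value of q
  have hLxu : (L *ᵥ x) u = (G.degree u : ℝ) + (if G.Adj u v then 1 else 0) := by
    rw [hL, G.lapMatrix_mulVec_apply]
    have hsum : ∑ t ∈ G.neighborFinset u, x t = -(if G.Adj u v then 1 else 0) := by
      simp [hx, Finset.sum_sub_distrib, Pi.single_apply, SimpleGraph.mem_neighborFinset]
    rw [hsum, hxu]
    ring
  have hLxv : (L *ᵥ x) v = -(G.degree v : ℝ) - (if G.Adj u v then 1 else 0) := by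
    rw [hL, G.lapMatrix_mulVec_apply]
    have hsum : ∑ t ∈ G.neighborFinset v, x t = (if G.Adj u v then 1 else 0) := by
      simp [hx, Finset.sum_sub_distrib, Pi.single_apply, SimpleGraph.mem_neighborFinset,
        G.adj_comm u v]
    rw [hsum, hxv]
    ring
  have hqval : q = (G.degree u : ℝ) + (G.degree v : ℝ) + 2 * (if G.Adj u v then 1 else 0) := by
    have hdot : x ⬝ᵥ L *ᵥ x = (L *ᵥ x) u - (L *ᵥ x) v := by
      rw [hx, sub_dotProduct, single_dotProduct, single_dotProduct]
      ring
    rw [hq, hdot, hLxu, hLxv]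
    ring
  have hdegu : (G.degree u : ℝ) < n := by rw [hn]; exact_mod_cast G.degree_lt_card_verts u
  have hdegv : (G.degree v : ℝ) < n := by rw [hn]; exact_mod_cast G.degree_lt_card_verts v
  have hq2n : q < 2 * n := by
    by_cases hadj : G.Adj u v
    · have hnat : G.degree u + G.degree v + 2 < 2 * Fintype.card V := by
        by_contra hcon
        push_neg at hcon
        have h1 : G.degree u < Fintype.card V := G.degree_lt_card_verts u
        have h2 : G.degree v < Fintype.card V := G.degree_lt_card_verts v
        have hu' : G.degree u = Fintype.card V - 1 := by omega
        have hv' : G.degree v = Fintype.card V - 1 := by omega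
        exact no_bridge G hcard huv (degree_full G hu') (degree_full G hv') hbridge
      rw [hqval, if_pos hadj, hn]
      have hnat' : (G.degree u : ℝ) + G.degree v + 2 < 2 * (Fintype.card V : ℝ) := by
        exact_mod_cast hnat
      linarith
    · rw [hqval, if_neg hadj]
      linarith
  set y := A⁻¹ *ᵥ x with hy
  have hAy : A *ᵥ y = x := by
    rw [hy, Matrix.mulVec_mulVec, hAinv, Matrix.one_mulVec]
  have hyAx : y ⬝ᵥ (A *ᵥ x) = 2 := by
    rw [Matrix.dotProduct_mulVec, ← Matrix.mulVec_transpose, hAsymm, hAy, hxx]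
  have hxAy : x ⬝ᵥ (A *ᵥ y) = 2 := by rw [hAy, hxx]
  have hyAy : y ⬝ᵥ (A *ᵥ y) = x ⬝ᵥ y := by rw [hAy, dotProduct_comm]
  set Ω := x ⬝ᵥ y with hΩ
  have hCS : 4 / q ≤ Ω := by
    set t : ℝ := -2 / q with ht
    have hpsd : 0 ≤ (y + t • x) ⬝ᵥ A *ᵥ (y + t • x) := by
      have h0 := hApos.posSemidef.dotProduct_mulVec_nonneg (y + t • x)
      rwa [star_trivial] at h0
    have hexp : (y + t • x) ⬝ᵥ A *ᵥ (y + t • x) = Ω + t * 2 + t * 2 + t * t * q := by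
      rw [Matrix.mulVec_add, Matrix.mulVec_smul, dotProduct_add,
        add_dotProduct, add_dotProduct, dotProduct_smul,
        smul_dotProduct, smul_dotProduct, dotProduct_smul]
      rw [hyAy, hyAx, hxAy, hAx]
      simp only [smul_eq_mul, ← hq, ← hΩ]
      ring
    rw [hexp] at hpsd
    have hqne : q ≠ 0 := ne_of_gt hq0
    have h2 : t * 2 = -4 / q := by rw [ht]; ring
    have h4 : t * t * q = 4 / q := by rw [ht]; field_simp; ring
    rw [h2, h4] at hpsd
    have h5 : -4 / q = -(4 / q) := by ring
    rw [h5] at hpsd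
    linarith
  have hres : x ⬝ᵥ (pinv L) *ᵥ x = Ω := by
    rw [hpinv, hB, Matrix.sub_mulVec, Matrix.smul_mulVec, hJx, smul_zero, sub_zero,
      hΩ, hy]
  have hfinal : 2 / n < 4 / q := by
    have h1 : 4 / (2 * n) < 4 / q := div_lt_div_of_pos_left (by norm_num) hq0 hq2n
    have h2 : 4 / (2 * n) = 2 / n := by
      field_simp
      ring
    linarith
  calc 2 / n < 4 / q := hfinal
  _ ≤ Ω := hCS
  _ = x ⬝ᵥ (pinv L) *ᵥ x := hres.symm

end Graph

theorem stmt13 {V : Type*} [Fintype V] [DecidableEq V] (G : SimpleGraph V)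
    (hG : G.Connected) (hcard : 3 ≤ Fintype.card V) (hbridge : ∃ e, e ∈ G.edgeSet ∧ G.IsBridge e) :
    ∀ u v : V, u ≠ v → 2 / (Fintype.card V : ℝ) < resDist G u v := by
  intro u v huv
  letI : DecidableRel G.Adj := Classical.decRel _
  unfold resDist
  obtain ⟨e, -, he⟩ := hbridge
  exact main_aux G hG hcard ⟨e, he⟩ u v huv
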